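/- Let Δ : A → A be a K-linear endomorphism with Δ(1)=0 of a commutative unital K-algebra A, and let a ∈ A be nilpotent. Then K(Δ)_n(a,…,a) = 0 for all sufficiently large n and Σ_{n≥1} (1/n!) K(Δ)_n(a,…,a) = exp(−a)·Δ(exp(a)), where exp(a) := Σ_{m≥0} a^m/m! (a finite sum by nilpotency). In particular Σ_{n≥1} (1/n!) K(Δ)_n(a,…,a) = 0 if and only if Δ(exp(a)) = 0. -/

import Mathlib

open Finset

/-- The `n`-th Koszul bracket of an operator `D` on a commutative ring. -/
noncomputable def koszul {R : Type*} [CommRing R] (D : R → R) (n : ℕ) (a : Fin n → R) : R :=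
  ∑ s ∈ (Finset.univ : Finset (Fin n)).powerset.filter fun s => s.Nonempty,
    (-1 : ℤ) ^ (n - s.card) • (D (∏ i ∈ s, a i) * ∏ i ∈ sᶜ, a i)

/-- Exponential `exp(a) = Σ_{m≥0} a^m/m!` of an element of a `K`-algebra; the sum is
finite whenever `a` is nilpotent. -/
noncomputable def expNil (K : Type*) {A : Type*} [Field K] [CommRing A] [Algebra K A]
    (a : A) : A :=
  ∑ᶠ m : ℕ, ((m.factorial : K)⁻¹) • a ^ m

/-- Diagonal values of the Koszul bracket. -/
lemma koszul_diag {A : Type*} [CommRing A] (D : A → A) (hD : D 1 = 0) (a : A) (n : ℕ) :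
    koszul D n (fun _ => a) =
      ∑ k ∈ Finset.range (n + 1),
        (n.choose k : A) * ((-1 : A) ^ (n - k) * (D (a ^ k) * a ^ (n - k))) := by
  have hterm : ∀ s : Finset (Fin n),
      (-1 : ℤ) ^ (n - s.card) • (D (∏ _i ∈ s, a) * ∏ _i ∈ sᶜ, a)
        = (-1 : A) ^ (n - s.card) * (D (a ^ s.card) * a ^ (n - s.card)) := by
    intro s
    rw [Finset.prod_const, Finset.prod_const, Finset.card_compl, Fintype.card_fin,
      zsmul_eq_mul]
    push_cast
    ring
  have h1 : koszul D n (fun _ => a)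
      = ∑ s ∈ (Finset.univ : Finset (Fin n)).powerset,
          (-1 : A) ^ (n - s.card) * (D (a ^ s.card) * a ^ (n - s.card)) := by
    rw [koszul, Finset.sum_filter]
    refine Finset.sum_congr rfl fun s _ => ?_
    by_cases hs : s.Nonempty
    · rw [if_pos hs, hterm]
    · rw [if_neg hs]
      rw [Finset.not_nonempty_iff_eq_empty] at hs
      subst hs
      simp [hD]
  rw [h1, Finset.sum_powerset]
  rw [Finset.card_univ, Fintype.card_fin]
  refine Finset.sum_congr rfl fun k _hk => ?_
  have hc : ∀ t ∈ Finset.powersetCard k (Finset.univ : Finset (Fin n)),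
      (-1 : A) ^ (n - t.card) * (D (a ^ t.card) * a ^ (n - t.card))
        = (-1 : A) ^ (n - k) * (D (a ^ k) * a ^ (n - k)) := by
    intro t ht
    rw [(Finset.mem_powersetCard.1 ht).2]
  rw [Finset.sum_congr rfl hc, Finset.sum_const, Finset.card_powersetCard, Finset.card_univ,
    Fintype.card_fin, nsmul_eq_mul]

/-- A double sum over antidiagonals equals a sum over a square, for functions vanishing
outside the square. -/
lemma sum_antidiag_sq {M : Type*} [AddCommMonoid M] {N n0 : ℕ} (h : 2 * N ≤ n0)
    (F : ℕ × ℕ → M) (hF : ∀ p : ℕ × ℕ, N ≤ p.1 ∨ N ≤ p.2 → F p = 0) :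
    ∑ n ∈ Finset.range n0, ∑ p ∈ Finset.HasAntidiagonal.antidiagonal n, F p
      = ∑ p ∈ Finset.range N ×ˢ Finset.range N, F p := by
  rw [← Finset.sum_biUnion (by
    intro x _ y _ hxy
    apply Finset.disjoint_left.2
    intro p hpx hpy
    exact hxy (by rw [← Finset.HasAntidiagonal.mem_antidiagonal.1 hpx, Finset.HasAntidiagonal.mem_antidiagonal.1 hpy]))]
  refine (Finset.sum_subset ?_ ?_).symm
  · intro p hp
    simp only [Finset.mem_product, Finset.mem_range] at hp
    exact Finset.mem_biUnion.2
      ⟨p.1 + p.2, Finset.mem_range.2 (by omega), Finset.HasAntidiagonal.mem_antidiagonal.2 rfl⟩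
  · intro p _ hp
    apply hF
    by_contra hc
    push_neg at hc
    exact hp (Finset.mem_product.2
      ⟨Finset.mem_range.2 (by omega), Finset.mem_range.2 (by omega)⟩)

lemma fact_inv_eq {K : Type*} [Field K] [CharZero K] (k n : ℕ) (h : k ≤ n) :
    ((n.factorial : K))⁻¹ * (n.choose k : K) = ((k.factorial * (n - k).factorial : ℕ) : K)⁻¹ := by
  have h2 := Nat.add_choose_mul_factorial_mul_factorial k (n - k)
  rw [Nat.add_sub_cancel' h, Nat.choose_symm h] at h2
  have h3 : ((n.factorial : K)) ≠ 0 := Nat.cast_ne_zero.2 (Nat.factorial_ne_zero _)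
  have h5 : ((n.choose k : K)) * ((k.factorial * (n - k).factorial : ℕ) : K)
      = (n.factorial : K) := by
    have : n.choose k * (k.factorial * (n - k).factorial) = n.factorial := by
      rw [← h2]; ring
    exact_mod_cast congrArg (fun z : ℕ => (z : K)) this
  refine eq_inv_of_mul_eq_one_right ?_
  rw [mul_comm, mul_assoc, h5, inv_mul_cancel₀ h3]

/-- for a linear endomorphism `Δ` with `Δ(1)=0` and a nilpotent `a`, the
diagonal Koszul brackets eventually vanish, `Σ_{n≥1} (1/n!) K(Δ)_n(a,…,a) =
exp(−a)·Δ(exp(a))`, and this sum vanishes iff `Δ(exp(a)) = 0`. -/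
theorem koszul_exp (K A : Type*) [Field K] [CharZero K]
    [CommRing A] [Algebra K A] (Δ : A →ₗ[K] A) (hΔ : Δ 1 = 0)
    (a : A) (ha : IsNilpotent a) :
    (∃ N : ℕ, ∀ n : ℕ, N ≤ n → koszul (⇑Δ) n (fun _ => a) = 0) ∧
    (∑ᶠ n : ℕ, (((n + 1).factorial : K)⁻¹) • koszul (⇑Δ) (n + 1) (fun _ => a)) =
      expNil K (-a) * Δ (expNil K a) ∧
    ((∑ᶠ n : ℕ, (((n + 1).factorial : K)⁻¹) • koszul (⇑Δ) (n + 1) (fun _ => a)) = 0 ↔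
      Δ (expNil K a) = 0) := by
  obtain ⟨N0, hN0⟩ := ha
  set N := N0 + 1 with hNdef
  have hpow : ∀ m, N ≤ m → a ^ m = 0 := by
    intro m hm
    have h1 : a ^ m = a ^ N0 * a ^ (m - N0) := by
      rw [← pow_add]; congr 1; omega
    rw [h1, hN0, zero_mul]
  have hpowneg : ∀ m, N ≤ m → (-a) ^ m = 0 := by
    intro m hm; rw [neg_pow, hpow m hm, mul_zero]
  have hD0 : ∀ k, N ≤ k → Δ (a ^ k) = 0 := by
    intro k hk; rw [hpow k hk, map_zero]
  have hexp : ∀ b : A, (∀ m, N ≤ m → b ^ m = 0) →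
      expNil K b = ∑ m ∈ Finset.range N, ((m.factorial : K)⁻¹) • b ^ m := by
    intro b hb
    apply finsum_eq_sum_of_support_subset
    intro m hm
    simp only [Function.mem_support] at hm
    by_contra hc
    simp only [Finset.coe_range, Set.mem_Iio, not_lt] at hc
    exact hm (by rw [hb m hc, smul_zero])
  have hK0 : ∀ n, 2 * N ≤ n → koszul (⇑Δ) n (fun _ => a) = 0 := by
    intro n hn
    rw [koszul_diag _ hΔ]
    apply Finset.sum_eq_zero
    intro k _hk
    rcases le_or_gt N k with h | h
    · rw [hD0 k h, zero_mul, mul_zero, mul_zero]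
    · rw [hpow (n - k) (by omega), mul_zero, mul_zero, mul_zero]
  set F : ℕ × ℕ → A := fun p =>
    ((p.1.factorial * p.2.factorial : ℕ) : K)⁻¹ • ((-1 : A) ^ p.2 * (a ^ p.2 * Δ (a ^ p.1)))
    with hFdef
  have hFvan : ∀ p : ℕ × ℕ, N ≤ p.1 ∨ N ≤ p.2 → F p = 0 := by
    rintro ⟨k, j⟩ (h | h) <;> simp only [hFdef]
    · rw [hD0 k h, mul_zero, mul_zero, smul_zero]
    · rw [hpow j h, zero_mul, mul_zero, smul_zero]
  have hterm : ∀ n : ℕ, (((n + 1).factorial : K)⁻¹) • koszul (⇑Δ) (n + 1) (fun _ => a)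
      = ∑ p ∈ Finset.HasAntidiagonal.antidiagonal (n + 1), F p := by
    intro n
    rw [koszul_diag _ hΔ, Finset.Nat.sum_antidiagonal_eq_sum_range_succ_mk, Finset.smul_sum]
    refine Finset.sum_congr rfl fun k hk => ?_
    have hk' : k ≤ n + 1 := Nat.lt_succ_iff.1 (Finset.mem_range.1 hk)
    simp only [hFdef]
    have hmul : ((n + 1).choose k : A) * ((-1 : A) ^ (n + 1 - k) * (Δ (a ^ k) * a ^ (n + 1 - k)))
        = ((n + 1).choose k : ℕ) • ((-1 : A) ^ (n + 1 - k) * (a ^ (n + 1 - k) * Δ (a ^ k))) := by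
      rw [nsmul_eq_mul]; ring
    rw [hmul, ← Nat.cast_smul_eq_nsmul K, smul_smul, fact_inv_eq k (n + 1) hk']
  have hS : (∑ᶠ n : ℕ, (((n + 1).factorial : K)⁻¹) • koszul (⇑Δ) (n + 1) (fun _ => a))
      = ∑ p ∈ Finset.range N ×ˢ Finset.range N, F p := by
    have hsupp : (Function.support fun n : ℕ =>
        (((n + 1).factorial : K)⁻¹) • koszul (⇑Δ) (n + 1) (fun _ => a))
        ⊆ ↑(Finset.range (2 * N)) := by
      intro m hm
      simp only [Function.mem_support] at hm
      by_contra hc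
      simp only [Finset.coe_range, Set.mem_Iio, not_lt] at hc
      exact hm (by rw [hK0 (m + 1) (by omega), smul_zero])
    rw [finsum_eq_sum_of_support_subset _ hsupp]
    have h1 : ∑ n ∈ Finset.range (2 * N),
          (((n + 1).factorial : K)⁻¹) • koszul (⇑Δ) (n + 1) (fun _ => a)
        = ∑ n ∈ Finset.range (2 * N), ∑ p ∈ Finset.HasAntidiagonal.antidiagonal (n + 1), F p :=
      Finset.sum_congr rfl fun n _ => hterm n
    have h2 : ∑ n ∈ Finset.range (2 * N + 1), ∑ p ∈ Finset.HasAntidiagonal.antidiagonal n, F p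
        = (∑ n ∈ Finset.range (2 * N), ∑ p ∈ Finset.HasAntidiagonal.antidiagonal (n + 1), F p)
          + ∑ p ∈ Finset.HasAntidiagonal.antidiagonal 0, F p :=
      Finset.sum_range_succ' _ _
    have h3 : ∑ p ∈ Finset.HasAntidiagonal.antidiagonal 0, F p = 0 := by
      simp [hFdef, hΔ]
    rw [h1, ← add_zero (∑ n ∈ Finset.range (2 * N), ∑ p ∈ Finset.HasAntidiagonal.antidiagonal (n + 1), F p),
      ← h3, ← h2, sum_antidiag_sq (by omega) F hFvan]
  have hR : expNil K (-a) * Δ (expNil K a) = ∑ p ∈ Finset.range N ×ˢ Finset.range N, F p := by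
    rw [hexp a hpow, hexp (-a) hpowneg, map_sum, Finset.sum_mul_sum, Finset.sum_product]
    rw [Finset.sum_comm]
    refine Finset.sum_congr rfl fun j _ => Finset.sum_congr rfl fun k _ => ?_
    simp only [hFdef, map_smul]
    rw [smul_mul_assoc, mul_smul_comm, smul_smul]
    have hsc : ((j.factorial * k.factorial : ℕ) : K)⁻¹
        = (k.factorial : K)⁻¹ * (j.factorial : K)⁻¹ := by
      push_cast [mul_inv]; ring
    rw [hsc]
    congr 1
    rw [neg_pow, mul_assoc]
  have hprod : expNil K (-a) * expNil K a = 1 := by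
    rw [hexp a hpow, hexp (-a) hpowneg, Finset.sum_mul_sum]
    set G : ℕ × ℕ → A := fun p =>
      ((p.1.factorial * p.2.factorial : ℕ) : K)⁻¹ • ((-1 : A) ^ p.1 * a ^ (p.1 + p.2))
      with hGdef
    have hGvan : ∀ p : ℕ × ℕ, N ≤ p.1 ∨ N ≤ p.2 → G p = 0 := by
      rintro ⟨k, j⟩ (h | h) <;> simp only [hGdef] <;>
        rw [hpow (k + j) (by omega), mul_zero, smul_zero]
    have h1 : ∑ j ∈ Finset.range N, ∑ k ∈ Finset.range N,
          (((j.factorial : K)⁻¹) • (-a) ^ j) * (((k.factorial : K)⁻¹) • a ^ k)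
        = ∑ p ∈ Finset.range N ×ˢ Finset.range N, G p := by
      rw [Finset.sum_product]
      refine Finset.sum_congr rfl fun j _ => Finset.sum_congr rfl fun k _ => ?_
      simp only [hGdef]
      rw [smul_mul_assoc, mul_smul_comm, smul_smul]
      have hsc : ((j.factorial * k.factorial : ℕ) : K)⁻¹
          = (j.factorial : K)⁻¹ * (k.factorial : K)⁻¹ := by
        push_cast [mul_inv]; ring
      rw [hsc]
      congr 1
      rw [neg_pow, pow_add]
      ring
    rw [h1, ← sum_antidiag_sq (n0 := 2 * N + 1) (by omega) G hGvan]
    have hinner : ∀ n : ℕ, ∑ p ∈ Finset.HasAntidiagonal.antidiagonal n, G p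
        = if n = 0 then (1 : A) else 0 := by
      intro n
      rw [Finset.Nat.sum_antidiagonal_eq_sum_range_succ_mk]
      have hc : ∀ k ∈ Finset.range (n + 1),
          G (k, n - k) = ((n.factorial : K)⁻¹ * ((-1 : K) ^ k * (n.choose k : K))) • a ^ n := by
        intro k hk
        have hk' : k ≤ n := Nat.lt_succ_iff.1 (Finset.mem_range.1 hk)
        simp only [hGdef]
        have hsub : k + (n - k) = n := by omega
        rw [hsub, ← fact_inv_eq k n hk']
        have hneg : (-1 : A) ^ k * a ^ n = ((-1 : K) ^ k) • a ^ n := by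
          rw [Algebra.smul_def, map_pow, map_neg, map_one]
        rw [hneg, smul_smul]
        congr 1
        ring
      rw [Finset.sum_congr rfl hc, ← Finset.sum_smul, ← Finset.mul_sum]
      have h2 : ∑ k ∈ Finset.range (n + 1), ((-1 : K) ^ k * (n.choose k : K))
          = if n = 0 then (1 : K) else 0 := by
        have h3 := Int.alternating_sum_range_choose (n := n)
        calc ∑ k ∈ Finset.range (n + 1), ((-1 : K) ^ k * (n.choose k : K))
            = ((∑ i ∈ Finset.range (n + 1), (-1 : ℤ) ^ i * (n.choose i : ℤ) : ℤ) : K) := by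
              push_cast; rfl
          _ = ((if n = 0 then (1 : ℤ) else 0 : ℤ) : K) := by rw [h3]
          _ = if n = 0 then (1 : K) else 0 := by split <;> simp
      rw [h2]
      rcases Nat.eq_zero_or_pos n with rfl | hn
      · simp
      · rw [if_neg (by omega), if_neg (by omega), mul_zero, zero_smul]
    rw [Finset.sum_congr rfl fun n _ => hinner n]
    rw [Finset.sum_ite_eq' (Finset.range (2 * N + 1)) 0 (fun _ => (1 : A))]
    rw [if_pos (Finset.mem_range.2 (by omega))]
  refine ⟨⟨2 * N, hK0⟩, hS.trans hR.symm, ?_⟩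
  constructor
  · intro h0
    rw [hS, ← hR] at h0
    calc Δ (expNil K a) = expNil K a * (expNil K (-a) * Δ (expNil K a)) := by
          rw [← mul_assoc, mul_comm (expNil K a), hprod, one_mul]
      _ = 0 := by rw [h0, mul_zero]
  · intro h0
    rw [hS, ← hR, h0, mul_zero]
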